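/- Let 𝐊 be a field that is an algebraic extension of ℚ, and let 𝒪_𝐊 be the integral closure of ℤ in 𝐊. Then for every x ∈ 𝒪_𝐊: x ≠ 0 if and only if there exist y, z, w ∈ 𝒪_𝐊 such that (2y − 1)(3z − 1) = x·w. -/

import Mathlib

/-- For every nonzero integer `N` there are integers `a b v` with `(2a-1)(3b-1) = N v`. -/
lemma aux_int (N : ℤ) (hN : N ≠ 0) :
    ∃ a b v : ℤ, (2 * a - 1) * (3 * b - 1) = N * v := by
  set n : ℕ := N.natAbs with hn
  have hn0 : n ≠ 0 := Int.natAbs_ne_zero.mpr hN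
  set e : ℕ := n.factorization 2 with he
  set m : ℕ := n / 2 ^ e with hm
  have hmul : 2 ^ e * m = n := Nat.ordProj_mul_ordCompl_eq_self n 2
  have hmodd : ¬ (2 ∣ m) := Nat.not_dvd_ordCompl Nat.prime_two hn0
  have hc1 : IsCoprime (2 : ℤ) (m : ℤ) := by
    have : Nat.Coprime 2 m := (Nat.Prime.coprime_iff_not_dvd Nat.prime_two).mpr hmodd
    exact_mod_cast this.isCoprime
  have hc2 : IsCoprime (3 : ℤ) ((2 : ℤ) ^ e) := by
    have : IsCoprime (3 : ℤ) (2 : ℤ) := by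
      have : Nat.Coprime 3 2 := by decide
      exact_mod_cast this.isCoprime
    exact this.pow_right
  obtain ⟨u, v, huv⟩ := hc1
  obtain ⟨u', v', huv'⟩ := hc2
  -- 2*u - 1 = -(v*m), 3*u' - 1 = -(v'*2^e)
  have h1 : 2 * u - 1 = -(v * (m : ℤ)) := by linarith
  have h2 : 3 * u' - 1 = -(v' * (2 : ℤ) ^ e) := by linarith
  have hNn : N ∣ (n : ℤ) := Int.dvd_natAbs.mpr dvd_rfl
  obtain ⟨c, hc⟩ := hNn
  refine ⟨u, u', v * v' * c, ?_⟩
  have hnm : ((2 : ℤ) ^ e) * (m : ℤ) = (n : ℤ) := by exact_mod_cast hmul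
  calc (2 * u - 1) * (3 * u' - 1) = (v * v') * ((2 : ℤ) ^ e * (m : ℤ)) := by
        rw [h1, h2]; ring
    _ = (v * v') * (n : ℤ) := by rw [hnm]
    _ = N * (v * v' * c) := by rw [hc]; ring

/-- A nonzero element of the integral closure divides a nonzero integer. -/
lemma aux_dvd_int (K : Type*) [Field K] [CharZero K] [Algebra.IsAlgebraic ℚ K]
    (x : integralClosure ℤ K) (hx : x ≠ 0) :
    ∃ N : ℤ, N ≠ 0 ∧ x ∣ (N : integralClosure ℤ K) := by
  set ξ : K := (x : K) with hξ
  have hξ0 : ξ ≠ 0 := fun h => hx (Subtype.ext h)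
  have hint : IsIntegral ℤ ξ := x.2
  have hintQ : IsIntegral ℚ ξ := (Algebra.IsAlgebraic.isAlgebraic ξ).isIntegral
  set p : Polynomial ℤ := minpoly ℤ ξ with hp
  have hmap : minpoly ℚ ξ = p.map (algebraMap ℤ ℚ) :=
    minpoly.isIntegrallyClosed_eq_field_fractions ℚ K hint
  have hc0Q : (minpoly ℚ ξ).coeff 0 ≠ 0 := minpoly.coeff_zero_ne_zero hintQ hξ0
  have hc0 : p.coeff 0 ≠ 0 := by
    intro h
    apply hc0Q
    rw [hmap, Polynomial.coeff_map, h]; simp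
  refine ⟨p.coeff 0, hc0, ?_⟩
  -- aeval x p = 0 in the integral closure
  have haev : Polynomial.aeval x p = 0 := by
    have h1 : ((Polynomial.aeval x p : integralClosure ℤ K) : K) = Polynomial.aeval ξ p := by
      exact (Polynomial.aeval_algebraMap_apply K x p).symm
    have hz : Polynomial.aeval ξ p = 0 := minpoly.aeval ℤ ξ
    apply Subtype.coe_injective
    show ((Polynomial.aeval x p : integralClosure ℤ K) : K) = ((0 : integralClosure ℤ K) : K)
    rw [h1, hz]; simp
  have key : Polynomial.X * p.divX + Polynomial.C (p.coeff 0) = p := Polynomial.X_mul_divX_add p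
  have h2 : x * Polynomial.aeval x p.divX + (p.coeff 0 : integralClosure ℤ K) = 0 := by
    have h3 := congrArg (Polynomial.aeval x) key
    rw [haev] at h3
    simpa [algebraMap_int_eq] using h3
  exact ⟨-Polynomial.aeval x p.divX, by linear_combination h2⟩

/-- No element of the integral closure is an inverse of an integer `n ≥ 2`. -/
lemma aux_no_inv (K : Type*) [Field K] [CharZero K] [Algebra.IsAlgebraic ℚ K]
    (n : ℤ) (hn : 1 < n) (y : integralClosure ℤ K) (h : (n : integralClosure ℤ K) * y = 1) :
    False := by
  have hK : (n : K) * (y : K) = 1 := by exact_mod_cast congrArg (Subtype.val) h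
  have hnK : (n : K) ≠ 0 := by
    exact_mod_cast (Int.cast_ne_zero (α := K)).mpr (by omega)
  have hyval : (y : K) = algebraMap ℚ K ((n : ℚ)⁻¹) := by
    rw [map_inv₀, map_intCast]
    rw [mul_comm] at hK
    exact eq_inv_of_mul_eq_one_left hK
  have hyint : IsIntegral ℤ ((n : ℚ)⁻¹) := by
    have := y.2
    rw [hyval] at this
    exact (isIntegral_algebraMap_iff (algebraMap ℚ K).injective).mp this
  obtain ⟨z, hz⟩ := IsIntegrallyClosed.isIntegral_iff.mp hyint
  have hnQ : (n : ℚ) ≠ 0 := by exact_mod_cast (by omega : n ≠ 0)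
  have hz' : (z : ℚ) = (n : ℚ)⁻¹ := by exact_mod_cast hz
  have hzn : (z : ℚ) * n = 1 := by rw [hz']; field_simp
  have : z * n = 1 := by exact_mod_cast hzn
  have := Int.eq_one_of_mul_eq_one_left (by omega) this
  omega

/-- Let `𝐊` be an algebraic extension of `ℚ` and `𝒪_𝐊` the integral closure
of `ℤ` in `𝐊`.  For `x ∈ 𝒪_𝐊`: `x ≠ 0` iff there exist `y, z, w ∈ 𝒪_𝐊` with
`(2y − 1)(3z − 1) = x·w`. -/
theorem stmt_1 (K : Type*) [Field K] [CharZero K] [Algebra.IsAlgebraic ℚ K]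
    (x : integralClosure ℤ K) :
    x ≠ 0 ↔ ∃ y z w : integralClosure ℤ K, (2 * y - 1) * (3 * z - 1) = x * w := by
  constructor
  · intro hx
    obtain ⟨N, hN, d, hd⟩ := aux_dvd_int K x hx
    obtain ⟨a, b, v, hab⟩ := aux_int N hN
    refine ⟨(a : ℤ), (b : ℤ), d * (v : ℤ), ?_⟩
    have : ((2 * a - 1) * (3 * b - 1) : ℤ) = N * v := hab
    calc (2 * (a : integralClosure ℤ K) - 1) * (3 * (b : integralClosure ℤ K) - 1)
        = (((2 * a - 1) * (3 * b - 1) : ℤ) : integralClosure ℤ K) := by push_cast; ring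
      _ = ((N * v : ℤ) : integralClosure ℤ K) := by rw [this]
      _ = x * (d * (v : ℤ)) := by push_cast; rw [hd]; ring
  · rintro ⟨y, z, w, h⟩ rfl
    rw [zero_mul] at h
    rcases mul_eq_zero.mp h with h' | h'
    · exact aux_no_inv K 2 (by norm_num) y (by push_cast; linear_combination h')
    · exact aux_no_inv K 3 (by norm_num) z (by push_cast; linear_combination h')
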